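/- Let S be a convex subset of a finite-dimensional real vector space V equipped with a symmetric bilinear form Q of signature (1,n) with n ≥ 2. Suppose (a) the set {α ∈ S : Q(α,α) > 0} has nonempty interior in V, (b) the set {α ∈ S : Q(α,α) = 0} has empty interior in the null cone {v : Q(v,v) = 0}, and (c) the null cone locally separates the regions {Q > 0} and {Q < 0} along any segment crossing it. Then S contains no element of negative square. -/

import Mathlib

/-- The standard quadratic form of signature `(1,n)` on `ℝ^{1+n}`. -/
def Qsig (n : ℕ) (v w : Fin (n + 1) → ℝ) : ℝ :=
  v 0 * w 0 - ∑ i : Fin n, v i.succ * w i.succ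

/-- Convexity argument from Lemma `possquare`: for `n ≥ 2`, if `S ⊆ ℝ^{1+n}` is convex,
the positive-square part of `S` has nonempty interior, the null part of `S` has empty
interior in the null cone, and the null cone separates the positive and negative regions
along any segment crossing them, then `S` contains no element of negative square. -/
theorem stmt_10 (n : ℕ) (hn : 2 ≤ n) (S : Set (Fin (n + 1) → ℝ))
    (hconv : Convex ℝ S)
    (hpos : (interior {α | α ∈ S ∧ 0 < Qsig n α α}).Nonempty)
    (hnull : ∀ U : Set (Fin (n + 1) → ℝ), IsOpen U →
      U ∩ {v | Qsig n v v = 0} ⊆ {α | α ∈ S ∧ Qsig n α α = 0} →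
      U ∩ {v | Qsig n v v = 0} = ∅)
    (hsep : ∀ x y : Fin (n + 1) → ℝ, Qsig n x x < 0 → 0 < Qsig n y y →
      ∃ t : ℝ, t ∈ Set.Icc (0 : ℝ) 1 ∧
        Qsig n (x + t • (y - x)) (x + t • (y - x)) = 0) :
    ∀ β ∈ S, 0 ≤ Qsig n β β := by
  intro β hβ
  by_contra hneg
  push_neg at hneg
  obtain ⟨c, hc⟩ := hpos
  set B := interior {α | α ∈ S ∧ 0 < Qsig n α α} with hB
  have hBopen : IsOpen B := isOpen_interior
  have hBsub : B ⊆ {α | α ∈ S ∧ 0 < Qsig n α α} := interior_subset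
  have hcS : c ∈ S ∧ 0 < Qsig n c c := hBsub hc
  -- the cone over β and B
  set U : Set (Fin (n + 1) → ℝ) :=
    ⋃ t ∈ Set.Ioc (0 : ℝ) 1, (fun y => β + t • (y - β)) '' B with hU
  have hUopen : IsOpen U := by
    refine isOpen_biUnion fun t ht => ?_
    have ht0 : t ≠ 0 := ne_of_gt ht.1
    have hmap : IsOpenMap (fun y : Fin (n + 1) → ℝ => β + t • (y - β)) := by
      have h1 := (Homeomorph.addLeft β).isOpenMap.comp
        (((Homeomorph.smulOfNeZero t ht0).isOpenMap).comp
          (Homeomorph.subRight β).isOpenMap)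
      simpa [Function.comp_def] using h1
    exact hmap B hBopen
  have hUsub : U ∩ {v | Qsig n v v = 0} ⊆ {α | α ∈ S ∧ Qsig n α α = 0} := by
    rintro z ⟨hzU, hz0⟩
    simp only [hU, Set.mem_iUnion, Set.mem_image] at hzU
    obtain ⟨t, ht, y, hy, rfl⟩ := hzU
    refine ⟨?_, hz0⟩
    have hy' := hBsub hy
    have := hconv hβ hy'.1 (a := 1 - t) (b := t) (by linarith [ht.2]) (le_of_lt ht.1)
      (by ring)
    have heq : (1 - t) • β + t • y = β + t • (y - β) := by
      simp [smul_sub, sub_smul, one_smul]; abel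
    rw [heq] at this
    exact this
  have hempty := hnull U hUopen hUsub
  obtain ⟨t, ht01, htQ⟩ := hsep β c hneg hcS.2
  have ht0 : t ≠ 0 := by
    rintro rfl
    simp only [zero_smul, add_zero] at htQ
    linarith
  have hz : β + t • (c - β) ∈ U ∩ {v | Qsig n v v = 0} := by
    refine ⟨?_, htQ⟩
    simp only [hU, Set.mem_iUnion, Set.mem_image]
    exact ⟨t, ⟨lt_of_le_of_ne ht01.1 (Ne.symm ht0), ht01.2⟩, c, hc, rfl⟩
  rw [hempty] at hz
  exact hz
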